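/- Let 0<β<1, δ>0, ϖ<0, 0<ρ<1, with βδ^{1-ρ}<1, and define T(f) = ((1−β) + β(δf+ϖ)^{1-ρ})^{1/(1-ρ)} on [−ϖ/δ, ∞). If (1−β)^{1/(1-ρ)} > −ϖ/δ, then T has a unique fixed point in [−ϖ/δ, ∞). -/

import Mathlib

open Real Set

/-- For `0 < ρ < 1`, `ϖ < 0`, `βδ^(1-ρ) < 1`, if `(1-β)^(1/(1-ρ)) > -ϖ/δ`, then
`T(f) = ((1-β) + β (δf+ϖ)^(1-ρ))^(1/(1-ρ))` has a unique fixed point on `[-ϖ/δ, ∞)`. -/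
theorem stmt10 (β ρ δ ϖ : ℝ) (hβ0 : 0 < β) (hβ1 : β < 1) (hδ : 0 < δ) (hϖ : ϖ < 0)
    (hρ0 : 0 < ρ) (hρ1 : ρ < 1) (hgrow : β * δ ^ (1 - ρ) < 1)
    (hcond : -ϖ / δ < (1 - β) ^ (1 / (1 - ρ))) :
    ∃! f : ℝ, f ∈ Set.Ici (-ϖ / δ) ∧
      ((1 - β) + β * (δ * f + ϖ) ^ (1 - ρ)) ^ (1 / (1 - ρ)) = f := by
  set p : ℝ := 1 - ρ with hpdef
  have hp : 0 < p := by simp only [hpdef]; linarith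
  have hp1 : p < 1 := by simp only [hpdef]; linarith
  set a : ℝ := -ϖ / δ with hadef
  have ha0 : 0 < a := div_pos (neg_pos.2 hϖ) hδ
  set T : ℝ → ℝ := fun f => ((1 - β) + β * (δ * f + ϖ) ^ p) ^ (1 / p) with hTdef
  have hδa : δ * a + ϖ = 0 := by
    rw [hadef]; field_simp; ring
  have hTa : T a = (1 - β) ^ (1 / p) := by
    simp [hTdef, hδa, Real.zero_rpow hp.ne']
  have haTa : a < T a := by rw [hTa]; exact hcond
  -- positivity of the argument for x > a
  have hw : ∀ x, a < x → 0 < δ * x + ϖ := by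
    intro x hx
    have h1 : δ * a < δ * x := mul_lt_mul_of_pos_left hx hδ
    linarith [hδa]
  have hw' : ∀ x, a ≤ x → 0 ≤ δ * x + ϖ := by
    intro x hx
    have h1 : δ * a ≤ δ * x := mul_le_mul_of_nonneg_left hx hδ.le
    linarith [hδa]
  -- continuity
  have hTcont : Continuous T := by
    apply Continuous.rpow_const
    · exact continuous_const.add (continuous_const.mul
        (((continuous_const.mul continuous_id).add continuous_const).rpow_const
          (fun x => Or.inr hp.le)))
    · intro x; exact Or.inr (by positivity)
  -- existence: find b with T b < b
  have hK : 0 < 1 - β * δ ^ p := by linarith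
  set K : ℝ := (1 - β) / (1 - β * δ ^ p) with hKdef
  have hKpos : 0 < K := div_pos (by linarith) hK
  set b : ℝ := max (a + 1) ((K + 1) ^ (1 / p)) with hbdef
  have hab : a < b := lt_of_lt_of_le (by linarith) (le_max_left _ _)
  have hb0 : 0 < b := ha0.trans hab
  have hbp : K < b ^ p := by
    have h1 : (K + 1 : ℝ) ^ (1 / p) ≤ b := le_max_right _ _
    have h2 : ((K + 1 : ℝ) ^ (1 / p)) ^ p ≤ b ^ p :=
      Real.rpow_le_rpow (Real.rpow_nonneg (by linarith) _) h1 hp.le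
    have h3 : ((K + 1 : ℝ) ^ (1 / p)) ^ p = K + 1 := by
      rw [← Real.rpow_mul (by linarith), one_div, inv_mul_cancel₀ hp.ne', Real.rpow_one]
    linarith
  have hTb : T b < b := by
    have ht0 : 0 ≤ δ * b + ϖ := hw' b hab.le
    have h1 : (δ * b + ϖ) ^ p ≤ (δ * b) ^ p :=
      Real.rpow_le_rpow ht0 (by linarith) hp.le
    have h2 : (δ * b) ^ p = δ ^ p * b ^ p := Real.mul_rpow hδ.le hb0.le
    have h4 : (1 - β) < (1 - β * δ ^ p) * b ^ p := by
      have := (div_lt_iff₀ hK).mp hbp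
      linarith
    have h3 : (1 - β) + β * (δ * b + ϖ) ^ p < b ^ p := by
      have h5 : β * (δ * b + ϖ) ^ p ≤ β * δ ^ p * b ^ p := by
        rw [mul_assoc, ← h2]; exact mul_le_mul_of_nonneg_left h1 hβ0.le
      nlinarith
    have h6 : 0 ≤ (1 - β) + β * (δ * b + ϖ) ^ p := by
      have := Real.rpow_nonneg ht0 p
      nlinarith
    have h5 : T b < (b ^ p) ^ (1 / p) := by
      exact Real.rpow_lt_rpow h6 h3 (by positivity)
    rwa [← Real.rpow_mul hb0.le, mul_one_div, div_self hp.ne', Real.rpow_one] at h5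
  -- IVT
  have hgc : ContinuousOn (fun x => T x - x) (Icc a b) :=
    (hTcont.sub continuous_id).continuousOn
  have h0mem : (0 : ℝ) ∈ Icc (T b - b) (T a - a) := ⟨by linarith, by linarith⟩
  obtain ⟨f₀, hf₀mem, hf₀⟩ := intermediate_value_Icc' hab.le hgc h0mem
  have hfix : T f₀ = f₀ := by
    have : T f₀ - f₀ = 0 := hf₀
    linarith
  -- derivative
  set q : ℝ := (1 - p) / p with hqdef
  have hq0 : 0 ≤ q := div_nonneg (by linarith) hp.le
  set D' : ℝ → ℝ := fun x => β * δ * ((1 - β) * (δ * x + ϖ) ^ (-p) + β) ^ q with hD'def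
  have hderivT : ∀ x ∈ Ioi a, HasDerivAt T (D' x) x := by
    intro x hx
    have ht : 0 < δ * x + ϖ := hw x hx
    have h1 : HasDerivAt (fun y => δ * y + ϖ) δ x := by
      simpa using ((hasDerivAt_id x).const_mul δ).add_const ϖ
    have h2 : HasDerivAt (fun y => (δ * y + ϖ) ^ p) (δ * p * (δ * x + ϖ) ^ (p - 1)) x :=
      h1.rpow_const (Or.inl ht.ne')
    have h3 : HasDerivAt (fun y => (1 - β) + β * (δ * y + ϖ) ^ p)
        (β * (δ * p * (δ * x + ϖ) ^ (p - 1))) x := (h2.const_mul β).const_add (1 - β)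
    have hwpos : 0 < (1 - β) + β * (δ * x + ϖ) ^ p := by
      have := Real.rpow_nonneg ht.le p
      nlinarith
    have h4 : HasDerivAt T
        ((β * (δ * p * (δ * x + ϖ) ^ (p - 1))) * (1 / p) *
          ((1 - β) + β * (δ * x + ϖ) ^ p) ^ (1 / p - 1)) x :=
      h3.rpow_const (Or.inl hwpos.ne')
    convert h4 using 1
    set t : ℝ := δ * x + ϖ
    have hpq : p * q = 1 - p := by
      rw [hqdef, mul_div_assoc', mul_comm p, mul_div_assoc, div_self hp.ne', mul_one]
    have e1 : (t ^ (-p)) ^ q = t ^ (p - 1) := by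
      rw [← Real.rpow_mul ht.le]
      congr 1
      field_simp [hqdef]
      linarith [hpq]
    have e2 : ((1 - β) + β * t ^ p) ^ (1 / p - 1) = ((1 - β) + β * t ^ p) ^ q := by
      congr 1
      field_simp [hqdef]
      linarith [hpq]
    have e3 : (1 - β) * t ^ (-p) + β = ((1 - β) + β * t ^ p) * t ^ (-p) := by
      have ht1 : t ^ p * t ^ (-p) = 1 := by
        rw [← Real.rpow_add ht]; simp
      rw [add_mul, mul_assoc, ht1, mul_one]
    have e4 : ((1 - β) * t ^ (-p) + β) ^ q = ((1 - β) + β * t ^ p) ^ q * t ^ (p - 1) := by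
      rw [e3, Real.mul_rpow hwpos.le (Real.rpow_nonneg ht.le _), e1]
    simp only [hD'def]
    rw [e4, e2]
    field_simp
  have hanti : AntitoneOn (deriv T) (Ioi a) := by
    intro x hx y hy hxy
    rw [(hderivT x hx).deriv, (hderivT y hy).deriv]
    have htx := hw x hx
    have hty := hw y hy
    have hxy' : δ * x + ϖ ≤ δ * y + ϖ := by
      have := mul_le_mul_of_nonneg_left hxy hδ.le
      linarith
    have h1 : (δ * y + ϖ) ^ (-p) ≤ (δ * x + ϖ) ^ (-p) := by
      rw [Real.rpow_neg htx.le, Real.rpow_neg hty.le]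
      exact inv_anti₀ (Real.rpow_pos_of_pos htx p)
        (Real.rpow_le_rpow htx.le hxy' hp.le)
    have h2 : (1 - β) * (δ * y + ϖ) ^ (-p) + β ≤ (1 - β) * (δ * x + ϖ) ^ (-p) + β := by
      have := mul_le_mul_of_nonneg_left h1 (show (0:ℝ) ≤ 1 - β by linarith)
      linarith
    have h3 : 0 ≤ (1 - β) * (δ * y + ϖ) ^ (-p) + β := by
      have := mul_nonneg (show (0:ℝ) ≤ 1 - β by linarith) (Real.rpow_nonneg hty.le (-p))
      linarith
    simp only [hD'def]
    exact mul_le_mul_of_nonneg_left (Real.rpow_le_rpow h3 h2 hq0) (by positivity)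
  have hdiff : DifferentiableOn ℝ T (interior (Ici a)) := by
    rw [interior_Ici]
    exact fun x hx => (hderivT x hx).differentiableAt.differentiableWithinAt
  have hconc : ConcaveOn ℝ (Ici a) T :=
    AntitoneOn.concaveOn_of_deriv (convex_Ici a) hTcont.continuousOn hdiff
      (by rwa [interior_Ici])
  -- uniqueness: no two distinct fixed points
  have key : ∀ y z : ℝ, y ∈ Ici a → T y = y → z ∈ Ici a → T z = z → ¬(y < z) := by
    intro y z hy hfy hz hfz hlt
    have hay : a < y := by
      rcases eq_or_lt_of_le (mem_Ici.mp hy) with h | h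
      · exfalso; rw [← h] at hfy; linarith
      · exact h
    have hza : 0 < z - a := by linarith
    set μ : ℝ := (z - y) / (z - a) with hμdef
    have hμval : μ = (z - y) / (z - a) := hμdef
    clear_value μ
    have hμ0 : 0 < μ := by rw [hμval]; exact div_pos (by linarith) hza
    have hν0 : 0 ≤ 1 - μ := by
      have : μ ≤ 1 := by
        rw [hμval, div_le_one hza]
        linarith
      linarith
    have hsum : μ + (1 - μ) = 1 := by ring
    have hcomb : μ * a + (1 - μ) * z = y := by
      rw [hμval]; field_simp; ring
    have hcc := hconc.2 (self_mem_Ici (a := a)) hz hμ0.le hν0 hsum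
    rw [smul_eq_mul, smul_eq_mul, smul_eq_mul, smul_eq_mul, hcomb, hfy, hfz] at hcc
    have hmul : μ * a < μ * T a := mul_lt_mul_of_pos_left haTa hμ0
    linarith
  have hfix' : ((1 - β) + β * (δ * f₀ + ϖ) ^ p) ^ (1 / p) = f₀ := by
    simpa only [hTdef] using hfix
  refine ⟨f₀, ⟨hf₀mem.1, hfix'⟩, ?_⟩
  intro y hy
  obtain ⟨hy1, hy2⟩ := hy
  have hy2' : T y = y := by simp only [hTdef]; exact hy2
  rcases lt_trichotomy y f₀ with h | h | h
  · exact absurd h (key y f₀ hy1 hy2' (mem_Ici.mpr hf₀mem.1) hfix)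
  · exact h
  · exact absurd h (key f₀ y (mem_Ici.mpr hf₀mem.1) hfix hy1 hy2')
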